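/- Let A be a real m×m matrix, τ > 0, n a natural number, N : ℕ → ℝᵐ a sequence of vectors, and Q : ℕ → ℝᵐ a sequence of vectors satisfying the single-step variation-of-constants recursion Q(k+1) = exp(τ·A)·Q(k) + ∫₀^τ exp((τ-s)·A)·N(k) ds for all k < n. Then Q(n) admits the discrete Duhamel representation Q(n) = exp(n·τ·A)·Q(0) + ∫₀^{n·τ} exp((n·τ - σ)·A)·Ñ(σ) dσ, where Ñ : ℝ → ℝᵐ is the piecewise constant interpolant defined by Ñ(σ) = N(k) for σ ∈ [k·τ, (k+1)·τ). -/

import Mathlib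

open Matrix MeasureTheory intervalIntegral

section Aux
variable {m : ℕ}

lemma expCont (A : Matrix (Fin m) (Fin m) ℝ) :
    Continuous fun t : ℝ => NormedSpace.exp (t • A) := by
  letI : SeminormedRing (Matrix (Fin m) (Fin m) ℝ) := Matrix.linftyOpSemiNormedRing
  letI : NormedRing (Matrix (Fin m) (Fin m) ℝ) := Matrix.linftyOpNormedRing
  letI : NormedAlgebra ℝ (Matrix (Fin m) (Fin m) ℝ) := Matrix.linftyOpNormedAlgebra
  exact (continuous_iff_continuousAt.2 fun x => (NormedSpace.exp_analytic (𝕂 := ℝ) x).continuousAt).comp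
    (continuous_id.smul continuous_const)

lemma contIntegrand (A : Matrix (Fin m) (Fin m) ℝ) (c : ℝ) (v : Fin m → ℝ) :
    Continuous fun σ : ℝ => (NormedSpace.exp ((c - σ) • A)).mulVec v :=
  Continuous.matrix_mulVec ((expCont A).comp (continuous_const.sub continuous_id))
    continuous_const

lemma expMul (A : Matrix (Fin m) (Fin m) ℝ) (a b : ℝ) :
    NormedSpace.exp (a • A) * NormedSpace.exp (b • A)
      = NormedSpace.exp ((a + b) • A) := by
  rw [add_smul, Matrix.exp_add_of_commute]
  exact ((Commute.refl A).smul_left a).smul_right b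

variable (A : Matrix (Fin m) (Fin m) ℝ) (τ : ℝ) (hτ : 0 < τ)
  (N : ℕ → Fin m → ℝ) (Ntil : ℝ → Fin m → ℝ)
  (hNtil : ∀ (σ : ℝ) (k : ℕ), σ ∈ Set.Ico ((k : ℝ) * τ) ((k + 1 : ℝ) * τ) → Ntil σ = N k)

include hτ hNtil in
lemma aeEqPiece (c : ℝ) (k : ℕ) :
    (fun σ : ℝ => (NormedSpace.exp ((c - σ) • A)).mulVec (N k))
      =ᵐ[volume.restrict (Set.uIoc ((k : ℝ) * τ) (((k : ℝ) + 1) * τ))]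
    fun σ : ℝ => (NormedSpace.exp ((c - σ) • A)).mulVec (Ntil σ) := by
  have h1 : (k : ℝ) * τ ≤ ((k : ℝ) + 1) * τ := by nlinarith
  rw [Set.uIoc_of_le h1]
  have hae : ∀ᵐ σ : ℝ ∂volume, σ ≠ ((k : ℝ) + 1) * τ := by
    refine ae_iff.mpr ?_
    simp only [not_ne_iff, Set.setOf_eq_eq_singleton]
    exact Real.volume_singleton
  filter_upwards [ae_restrict_mem measurableSet_Ioc, ae_restrict_of_ae hae] with σ hσ hne
  rw [hNtil σ k ⟨le_of_lt hσ.1, lt_of_le_of_ne hσ.2 hne⟩]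

include hτ hNtil in
lemma intPiece (c : ℝ) (k : ℕ) :
    IntervalIntegrable (fun σ : ℝ => (NormedSpace.exp ((c - σ) • A)).mulVec (Ntil σ))
      volume ((k : ℝ) * τ) (((k : ℝ) + 1) * τ) :=
  ((contIntegrand A c (N k)).intervalIntegrable _ _).congr_ae
    (aeEqPiece A τ hτ N Ntil hNtil c k)

include hτ hNtil in
lemma eqPiece (c : ℝ) (k : ℕ) :
    (∫ σ in ((k : ℝ) * τ)..(((k : ℝ) + 1) * τ),
        (NormedSpace.exp ((c - σ) • A)).mulVec (Ntil σ))
    = ∫ σ in ((k : ℝ) * τ)..(((k : ℝ) + 1) * τ),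
        (NormedSpace.exp ((c - σ) • A)).mulVec (N k) :=
  (intervalIntegral.integral_congr_ae
    (ae_imp_of_ae_restrict (aeEqPiece A τ hτ N Ntil hNtil c k))).symm

include hτ hNtil in
lemma intNtil (c : ℝ) : ∀ n : ℕ,
    IntervalIntegrable (fun σ : ℝ => (NormedSpace.exp ((c - σ) • A)).mulVec (Ntil σ))
      volume 0 ((n : ℝ) * τ)
  | 0 => by simp
  | (n + 1) => by
    have h := (intNtil c n).trans (intPiece A τ hτ N Ntil hNtil c n)
    have : ((n : ℝ) + 1) * τ = ((n + 1 : ℕ) : ℝ) * τ := by push_cast; ring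
    rwa [this] at h

end Aux

theorem stmt15 {m : ℕ} (A : Matrix (Fin m) (Fin m) ℝ) (τ : ℝ) (hτ : 0 < τ)
    (n : ℕ) (N : ℕ → Fin m → ℝ) (Q : ℕ → Fin m → ℝ)
    (hrec : ∀ k < n, Q (k + 1) = (NormedSpace.exp (τ • A)).mulVec (Q k)
      + ∫ s in (0 : ℝ)..τ, (NormedSpace.exp ((τ - s) • A)).mulVec (N k))
    (Ntil : ℝ → Fin m → ℝ)
    (hNtil : ∀ (σ : ℝ) (k : ℕ), σ ∈ Set.Ico ((k : ℝ) * τ) ((k + 1 : ℝ) * τ) →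
      Ntil σ = N k) :
    Q n = (NormedSpace.exp (((n : ℝ) * τ) • A)).mulVec (Q 0)
      + ∫ σ in (0 : ℝ)..((n : ℝ) * τ),
          (NormedSpace.exp (((n : ℝ) * τ - σ) • A)).mulVec (Ntil σ) := by
  revert hrec
  induction n with
  | zero =>
    intro _
    simp
  | succ n ih =>
    intro hrec
    have ihn := ih (fun k hk => hrec k (hk.trans n.lt_succ_self))
    have hQ := hrec n n.lt_succ_self
    set c : ℝ := ((n : ℝ) + 1) * τ with hcdef
    have hcast : ((n + 1 : ℕ) : ℝ) * τ = c := by rw [hcdef]; push_cast; ring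
    rw [hcast, hQ, ihn]
    -- pull exp(τ•A) through
    have hcomp : ∀ (b : ℝ) (v : Fin m → ℝ),
        (NormedSpace.exp (τ • A)).mulVec ((NormedSpace.exp (b • A)).mulVec v)
          = (NormedSpace.exp ((τ + b) • A)).mulVec v := by
      intro b v
      rw [Matrix.mulVec_mulVec, expMul]
    have hint_n := intNtil A τ hτ N Ntil hNtil ((n : ℝ) * τ) n
    have hint_c := intNtil A τ hτ N Ntil hNtil c n
    have hint_piece := intPiece A τ hτ N Ntil hNtil c n
    let L : (Fin m → ℝ) →L[ℝ] (Fin m → ℝ) :=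
      LinearMap.toContinuousLinearMap ((NormedSpace.exp (τ • A)).mulVecLin)
    have hL : ∀ v, L v = (NormedSpace.exp (τ • A)).mulVec v := fun _ => rfl
    have hpull : (NormedSpace.exp (τ • A)).mulVec
          (∫ σ in (0:ℝ)..((n:ℝ)*τ),
            (NormedSpace.exp (((n:ℝ)*τ - σ) • A)).mulVec (Ntil σ))
        = ∫ σ in (0:ℝ)..((n:ℝ)*τ),
            (NormedSpace.exp ((c - σ) • A)).mulVec (Ntil σ) := by
      rw [← hL, ← L.intervalIntegral_comp_comm hint_n]
      refine intervalIntegral.integral_congr fun σ _ => ?_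
      rw [hL, hcomp]
      congr 2
      rw [hcdef]; ring
    -- change of variables for the local integral
    have hcv : (∫ s in (0:ℝ)..τ, (NormedSpace.exp ((τ - s) • A)).mulVec (N n))
        = ∫ σ in ((n:ℝ)*τ)..c, (NormedSpace.exp ((c - σ) • A)).mulVec (N n) := by
      have h := intervalIntegral.integral_comp_add_right
        (f := fun σ => (NormedSpace.exp ((c - σ) • A)).mulVec (N n)) (a := (0:ℝ))
        (b := τ) ((n:ℝ)*τ)
      rw [zero_add] at h
      have hb : τ + (n:ℝ)*τ = c := by rw [hcdef]; ring
      rw [hb] at h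
      rw [← h]
      refine intervalIntegral.integral_congr fun s _ => ?_
      congr 2
      rw [hcdef]; ring
    have hpieceEq := eqPiece A τ hτ N Ntil hNtil c n
    have hadd := intervalIntegral.integral_add_adjacent_intervals hint_c hint_piece
    rw [Matrix.mulVec_add, hcomp, hpull, hcv, ← hpieceEq]
    have hτn : τ + (n:ℝ)*τ = c := by rw [hcdef]; ring
    rw [hτn, add_assoc, hadd, hcdef]
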